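/- For all positive integers a, b, c it holds that f(a,b,c+1) ≤ f(a,b,c) + 1, f(a,b+1,c) ≤ f(a,b,c) + 1, and f(a+1,b,c) ≤ f(a,b,c) + 1. -/

import Mathlib

/-- A question (and a secret) for `(a,b,c)`-Mastermind is a triple in
`Fin a × Fin b × Fin c`. -/
abbrev Question (a b c : ℕ) := Fin a × Fin b × Fin c

/-- `g s q` is the number of coordinates in which `s` and `q` agree. -/
def g {a b c : ℕ} (s q : Question a b c) : ℕ :=
  (if s.1 = q.1 then 1 else 0) + (if s.2.1 = q.2.1 then 1 else 0) +
    (if s.2.2 = q.2.2 then 1 else 0)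

/-- A finite set of questions is a feasible strategy if every pair of distinct
secrets is distinguished by some question. -/
def Feasible {a b c : ℕ} (Q : Finset (Question a b c)) : Prop :=
  ∀ s s' : Question a b c, s ≠ s' → ∃ q ∈ Q, g s q ≠ g s' q

/-- `f a b c` is the minimum cardinality of a feasible strategy for
`(a,b,c)`-Mastermind. -/
noncomputable def f (a b c : ℕ) : ℕ :=
  sInf {n : ℕ | ∃ Q : Finset (Question a b c), Feasible Q ∧ Q.card = n}

lemma feasible_univ (a b c : ℕ) : Feasible (Finset.univ : Finset (Question a b c)) := by
  intro s s' h
  refine ⟨s, Finset.mem_univ _, ?_⟩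
  have hs : g s s = 3 := by simp [g]
  have hs' : g s' s ≤ 2 := by
    by_cases e1 : s'.1 = s.1 <;> by_cases e2 : s'.2.1 = s.2.1 <;> by_cases e3 : s'.2.2 = s.2.2
    · exact absurd (Prod.ext e1 (Prod.ext e2 e3)) (Ne.symm h)
    all_goals simp [g, e1, e2, e3]
  omega

lemma f_mem (a b c : ℕ) :
    ∃ Q : Finset (Question a b c), Feasible Q ∧ Q.card = f a b c :=
  Nat.sInf_mem (s := {n : ℕ | ∃ Q : Finset (Question a b c), Feasible Q ∧ Q.card = n})
    ⟨_, Finset.univ, feasible_univ a b c, rfl⟩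

lemma f_le_card {a b c : ℕ} {Q : Finset (Question a b c)} (hQ : Feasible Q) :
    f a b c ≤ Q.card :=
  Nat.sInf_le ⟨Q, hQ, rfl⟩

/-- Transport along a `g`-preserving equivalence of question spaces. -/
lemma f_le_of_equiv {a b c a' b' c' : ℕ} (e : Question a b c ≃ Question a' b' c')
    (hg : ∀ s q, g (e s) (e q) = g s q) : f a' b' c' ≤ f a b c := by
  obtain ⟨Q, hQ, hcard⟩ := f_mem a b c
  have hfeas : Feasible (Q.image e) := by
    intro s s' hne
    obtain ⟨q, hq, hgq⟩ := hQ (e.symm s) (e.symm s')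
      (fun h => hne (by simpa using congrArg e h))
    refine ⟨e q, Finset.mem_image_of_mem _ hq, ?_⟩
    have h1 := hg (e.symm s) q
    have h2 := hg (e.symm s') q
    rw [e.apply_symm_apply] at h1 h2
    rw [h1, h2]; exact hgq
  calc f a' b' c' ≤ (Q.image e).card := f_le_card hfeas
    _ ≤ Q.card := Finset.card_image_le
    _ = f a b c := hcard

def e23 (a b c : ℕ) : Question a b c ≃ Question a c b where
  toFun s := (s.1, s.2.2, s.2.1)
  invFun s := (s.1, s.2.2, s.2.1)
  left_inv s := rfl
  right_inv s := rfl

def e13 (a b c : ℕ) : Question a b c ≃ Question c b a where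
  toFun s := (s.2.2, s.2.1, s.1)
  invFun s := (s.2.2, s.2.1, s.1)
  left_inv s := rfl
  right_inv s := rfl

lemma f_comm23 (a b c : ℕ) : f a c b ≤ f a b c :=
  f_le_of_equiv (e23 a b c) (by intro s q; simp only [e23, Equiv.coe_fn_mk, g]; grind)

lemma f_comm13 (a b c : ℕ) : f c b a ≤ f a b c :=
  f_le_of_equiv (e13 a b c) (by intro s q; simp only [e13, Equiv.coe_fn_mk, g]; grind)

/-- Embedding of questions via `castSucc` on the third coordinate. -/
def emb {a b c : ℕ} (q : Question a b c) : Question a b (c + 1) :=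
  (q.1, q.2.1, q.2.2.castSucc)

lemma key (a b c : ℕ) (ha : 0 < a) (hb : 0 < b) (hc : 0 < c) :
    f a b (c + 1) ≤ f a b c + 1 := by
  obtain ⟨Q, hQ, hcard⟩ := f_mem a b c
  by_cases hne : Q.Nonempty
  · obtain ⟨q0, hq0⟩ := hne
    set qstar : Question a b (c + 1) := (q0.1, q0.2.1, Fin.last c) with hqstar
    set Q' : Finset (Question a b (c + 1)) := Q.image emb ∪ {qstar} with hQ'
    have hfeas : Feasible Q' := by
      intro s s' hss
      by_cases h1 : s.2.2 = Fin.last c <;> by_cases h2 : s'.2.2 = Fin.last c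
      · -- both last
        obtain ⟨q, hq, hgq⟩ := hQ (s.1, s.2.1, ⟨0, hc⟩) (s'.1, s'.2.1, ⟨0, hc⟩)
          (by
            intro h
            apply hss
            rw [Prod.ext_iff, Prod.ext_iff] at h
            exact Prod.ext h.1 (Prod.ext h.2.1 (h1.trans h2.symm)))
        refine ⟨emb q, Finset.mem_union_left _ (Finset.mem_image_of_mem _ hq), ?_⟩
        have hlast : Fin.last c ≠ Fin.castSucc q.2.2 := (Fin.castSucc_lt_last _).ne'
        simp only [g, emb] at hgq ⊢
        simp only [h1, h2, hlast, if_false]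
        split_ifs at hgq ⊢ <;> grind
      · -- s last, s' not
        obtain ⟨u', hu'⟩ := Fin.eq_castSucc_of_ne_last h2
        replace hu' := hu'.symm
        by_cases hstar : g s qstar = g s' qstar
        · refine ⟨emb q0, Finset.mem_union_left _ (Finset.mem_image_of_mem _ hq0), ?_⟩
          intro heq
          have hlast : Fin.last c ≠ Fin.castSucc q0.2.2 := (Fin.castSucc_lt_last _).ne'
          have hlast' : Fin.castSucc u' ≠ Fin.last c := (Fin.castSucc_lt_last _).ne
          simp only [g, emb, hqstar, h1, hu', hlast, hlast', Fin.castSucc_inj,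
            if_true, if_false] at hstar heq
          split_ifs at hstar heq <;> grind
        · exact ⟨qstar, Finset.mem_union_right _ (Finset.mem_singleton_self _), hstar⟩
      · -- s' last, s not
        obtain ⟨u, hu⟩ := Fin.eq_castSucc_of_ne_last h1
        replace hu := hu.symm
        by_cases hstar : g s qstar = g s' qstar
        · refine ⟨emb q0, Finset.mem_union_left _ (Finset.mem_image_of_mem _ hq0), ?_⟩
          intro heq
          have hlast : Fin.last c ≠ Fin.castSucc q0.2.2 := (Fin.castSucc_lt_last _).ne'
          have hlast' : Fin.castSucc u ≠ Fin.last c := (Fin.castSucc_lt_last _).ne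
          simp only [g, emb, hqstar, h2, hu, hlast, hlast', Fin.castSucc_inj,
            if_true, if_false] at hstar heq
          split_ifs at hstar heq <;> grind
        · exact ⟨qstar, Finset.mem_union_right _ (Finset.mem_singleton_self _), hstar⟩
      · -- neither last
        obtain ⟨u, hu⟩ := Fin.eq_castSucc_of_ne_last h1
        replace hu := hu.symm
        obtain ⟨u', hu'⟩ := Fin.eq_castSucc_of_ne_last h2
        replace hu' := hu'.symm
        obtain ⟨q, hq, hgq⟩ := hQ (s.1, s.2.1, u) (s'.1, s'.2.1, u')
          (by
            intro h
            apply hss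
            rw [Prod.ext_iff, Prod.ext_iff] at h
            refine Prod.ext h.1 (Prod.ext h.2.1 ?_)
            rw [hu, hu']
            exact congrArg Fin.castSucc h.2.2)
        refine ⟨emb q, Finset.mem_union_left _ (Finset.mem_image_of_mem _ hq), ?_⟩
        simp only [g, emb, hu, hu', Fin.castSucc_inj] at hgq ⊢
        split_ifs at hgq ⊢ <;> grind
    calc f a b (c + 1) ≤ Q'.card := f_le_card hfeas
      _ ≤ (Q.image emb).card + 1 := by
          rw [hQ']
          exact le_trans (Finset.card_union_le _ _) (by simp)
      _ ≤ Q.card + 1 := by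
          have := Finset.card_image_le (s := Q) (f := emb)
          omega
      _ = f a b c + 1 := by rw [hcard]
  · -- Q is empty : everything is forced
    rw [Finset.not_nonempty_iff_eq_empty] at hne
    subst hne
    have hsub : ∀ s s' : Question a b c, s = s' := by
      intro s s'
      by_contra h
      obtain ⟨q, hqm, -⟩ := hQ s s' h
      simp at hqm
    have hc1 : c = 1 := by
      by_contra h
      have h2 : 2 ≤ c := by omega
      have := hsub (⟨0, ha⟩, ⟨0, hb⟩, ⟨0, hc⟩) (⟨0, ha⟩, ⟨0, hb⟩, ⟨1, h2⟩)
      rw [Prod.ext_iff, Prod.ext_iff] at this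
      have := this.2.2
      simp [Fin.ext_iff] at this
    subst hc1
    set qstar : Question a b 2 := (⟨0, ha⟩, ⟨0, hb⟩, Fin.last 1) with hqstar
    have hfeas : Feasible ({qstar} : Finset (Question a b 2)) := by
      intro s s' hss
      refine ⟨qstar, Finset.mem_singleton_self _, ?_⟩
      have e1 : s.1 = s'.1 ∧ s.2.1 = s'.2.1 := by
        have := hsub (s.1, s.2.1, ⟨0, hc⟩) (s'.1, s'.2.1, ⟨0, hc⟩)
        rw [Prod.ext_iff, Prod.ext_iff] at this
        exact ⟨this.1, this.2.1⟩
      have e3 : s.2.2 ≠ s'.2.2 := by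
        intro h
        exact hss (Prod.ext e1.1 (Prod.ext e1.2 h))
      simp only [g, e1.1, e1.2]
      have v1 : s.2.2.val < 2 := s.2.2.isLt
      have v2 : s'.2.2.val < 2 := s'.2.2.isLt
      have v3 : s.2.2.val ≠ s'.2.2.val := fun h => e3 (Fin.ext h)
      have hl : (Fin.last 1).val = 1 := rfl
      split_ifs with d1 d2 d2 <;>
        first
          | omega
          | (exfalso; rw [Fin.ext_iff] at d1 d2 ⊢ <;> omega)
    have : f a b 2 ≤ 1 := by
      have := f_le_card hfeas
      simpa using this
    simp at hcard
    show f a b 2 ≤ f a b 1 + 1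
    omega

theorem f_increase_by_one (a b c : ℕ) (ha : 0 < a) (hb : 0 < b) (hc : 0 < c) :
    f a b (c + 1) ≤ f a b c + 1 ∧ f a (b + 1) c ≤ f a b c + 1 ∧
      f (a + 1) b c ≤ f a b c + 1 := by
  refine ⟨key a b c ha hb hc, ?_, ?_⟩
  · calc f a (b + 1) c ≤ f a c (b + 1) := f_comm23 a c (b + 1)
      _ ≤ f a c b + 1 := key a c b ha hc hb
      _ ≤ f a b c + 1 := by have := f_comm23 a b c; omega
  · calc f (a + 1) b c ≤ f c b (a + 1) := f_comm13 c b (a + 1)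
      _ ≤ f c b a + 1 := key c b a hc hb ha
      _ ≤ f a b c + 1 := by have := f_comm13 a b c; omega
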